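/- The generating function M(x,y) = Σ_A x^{#H(A)} y^{#U(A)}, summed over all Motzkin paths A without peaks or valleys (including the empty path), satisfies M = (1 + y(M − 1))(1 + xM) as formal power series. -/

import Mathlib

/-- Steps of bargraphs / Motzkin paths. -/
inductive Step where
  | U : Step
  | H : Step
  | D : Step
deriving DecidableEq

/-- Vertical displacement of a step. -/
def Step.val : Step → ℤ
  | .U => 1
  | .H => 0
  | .D => -1

/-- Mirror of a step (swap U and D). -/
def Step.mirror : Step → Step
  | .U => .D
  | .H => .H
  | .D => .U

/-- Final height of a word. -/
def hgt (w : List Step) : ℤ := (w.map Step.val).sum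

/-- A Motzkin path prefix: never goes below the x-axis. -/
def IsMotzkinPrefix (w : List Step) : Prop := ∀ p : List Step, p <+: w → 0 ≤ hgt p

/-- A Motzkin path: never below the x-axis, ends at height 0. -/
def IsMotzkin (w : List Step) : Prop := IsMotzkinPrefix w ∧ hgt w = 0

/-- No peak `UD` and no valley `DU`. -/
def Cornerless (w : List Step) : Prop :=
  ¬ [Step.U, Step.D] <:+: w ∧ ¬ [Step.D, Step.U] <:+: w

/-- A bargraph: starts at the origin, ends on the x-axis, stays strictly above the
x-axis except at the endpoints, and has no factor `UD` or `DU`. -/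
def IsBargraph (w : List Step) : Prop :=
  2 ≤ w.length ∧ hgt w = 0 ∧
    (∀ p : List Step, p <+: w → p ≠ [] → p ≠ w → 0 < hgt p) ∧ Cornerless w

/-- Semiperimeter: number of `U` steps plus number of `H` steps. -/
def semi (w : List Step) : ℕ := w.count Step.U + w.count Step.H

/-- Length of the initial run of `U` steps. -/
def leadU : List Step → ℕ
  | Step.U :: rest => leadU rest + 1
  | _ => 0

/-- Length of the initial run of `H` steps. -/
def leadH : List Step → ℕ
  | Step.H :: rest => leadH rest + 1
  | _ => 0

/-- Length of the initial run of `D` steps. -/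
def leadD : List Step → ℕ
  | Step.D :: rest => leadD rest + 1
  | _ => 0

/-- Length of the first maximal run of `D` steps (0 if none). -/
def firstDescLen : List Step → ℕ
  | [] => 0
  | Step.D :: rest => leadD rest + 1
  | _ :: rest => firstDescLen rest

/-- Number of occurrences of the two-letter factor `a b`. -/
def cnt2 (a b : Step) : List Step → ℕ
  | x :: y :: rest => (if x = a ∧ y = b then 1 else 0) + cnt2 a b (y :: rest)
  | _ => 0

/-- Heights of the columns (`H` steps), starting from a given height. -/
def colHeights : ℤ → List Step → List ℤ
  | _, [] => []
  | h, Step.U :: rest => colHeights (h + 1) rest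
  | h, Step.H :: rest => h :: colHeights h rest
  | h, Step.D :: rest => colHeights (h - 1) rest

/-- Width of the leftmost maximal horizontal segment (0 if none). -/
def lhsW : List Step → ℕ
  | [] => 0
  | Step.H :: rest => leadH rest + 1
  | _ :: rest => lhsW rest

/-- Delete `h` steps at the start of the leftmost horizontal segment. -/
def stripLeadH (h : ℕ) : List Step → List Step
  | [] => []
  | Step.H :: rest => List.drop h (Step.H :: rest)
  | s :: rest => s :: stripLeadH h rest

/-- Number of initial columns of height 1: largest `j` such that the word begins `U H^j`. -/
def iuc : List Step → ℕ
  | Step.U :: rest => leadH rest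
  | _ => 0

/-- Number of maximal horizontal segments. -/
def hsCount : List Step → ℕ
  | [] => 0
  | [Step.H] => 1
  | [_] => 0
  | a :: b :: rest => (if a = Step.H ∧ b ≠ Step.H then 1 else 0) + hsCount (b :: rest)

/-- Mirror image: reverse the word and swap `U` with `D`. -/
def mir (w : List Step) : List Step := (w.reverse).map Step.mirror

/-- Shape of strictly alternating bargraphs:
`U^{i₁} H D^{k₁} H U^{i₂} H D^{k₂} H ⋯ U^{iₘ} H D^{kₘ}` with all `iᵣ, kᵣ ≥ 1`. -/
inductive SAShape : List Step → Prop where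
  | base (i k : ℕ) : 1 ≤ i → 1 ≤ k →
      SAShape (List.replicate i Step.U ++ [Step.H] ++ List.replicate k Step.D)
  | cons (i k : ℕ) (w : List Step) : 1 ≤ i → 1 ≤ k → SAShape w →
      SAShape (List.replicate i Step.U ++ [Step.H] ++ List.replicate k Step.D ++ [Step.H] ++ w)

/-- A strictly alternating bargraph. -/
def IsStrictAlt (w : List Step) : Prop := IsBargraph w ∧ SAShape w

/-- A secondary structure on `{0, …, m-1}`: all consecutive edges are present, every
vertex has at most one non-consecutive neighbour, and there are no crossing edges. -/
def IsSecondaryStructure {m : ℕ} (G : SimpleGraph (Fin m)) : Prop :=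
  (∀ i j : Fin m, (i : ℕ) + 1 = (j : ℕ) → G.Adj i j) ∧
  (∀ i j k : Fin m, G.Adj i j → G.Adj i k →
      (i : ℕ) + 1 ≠ (j : ℕ) → (j : ℕ) + 1 ≠ (i : ℕ) →
      (i : ℕ) + 1 ≠ (k : ℕ) → (k : ℕ) + 1 ≠ (i : ℕ) → j = k) ∧
  ¬ ∃ i j k l : Fin m, (i : ℕ) < (j : ℕ) ∧ (j : ℕ) < (k : ℕ) ∧ (k : ℕ) < (l : ℕ) ∧
      G.Adj i k ∧ G.Adj j l

/-- Generating function of bargraphs: `x` (variable 0) marks `H` steps,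
`y` (variable 1) marks `U` steps. -/
noncomputable def BG : MvPowerSeries (Fin 2) ℚ :=
  fun d => (Nat.card {w : List Step //
    IsBargraph w ∧ w.count Step.H = d 0 ∧ w.count Step.U = d 1} : ℚ)

/-- Generating function of cornerless Motzkin paths. -/
noncomputable def MG : MvPowerSeries (Fin 2) ℚ :=
  fun d => (Nat.card {w : List Step //
    IsMotzkin w ∧ Cornerless w ∧ w.count Step.H = d 0 ∧ w.count Step.U = d 1} : ℚ)

/-- Generating function of bargraphs avoiding the factor `DH`. -/
noncomputable def BDH : MvPowerSeries (Fin 2) ℚ :=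
  fun d => (Nat.card {w : List Step //
    IsBargraph w ∧ ¬ [Step.D, Step.H] <:+: w ∧
      w.count Step.H = d 0 ∧ w.count Step.U = d 1} : ℚ)

/-- Generating function of bargraphs avoiding the factors `DH` and `HH`. -/
noncomputable def BDHHH : MvPowerSeries (Fin 2) ℚ :=
  fun d => (Nat.card {w : List Step //
    IsBargraph w ∧ ¬ [Step.D, Step.H] <:+: w ∧ ¬ [Step.H, Step.H] <:+: w ∧
      w.count Step.H = d 0 ∧ w.count Step.U = d 1} : ℚ)

/-- Generating function of cornerless Motzkin path prefixes ending at height `h`. -/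
noncomputable def Pgf (h : ℕ) : MvPowerSeries (Fin 2) ℚ :=
  fun d => (Nat.card {w : List Step //
    IsMotzkinPrefix w ∧ Cornerless w ∧ hgt w = (h : ℤ) ∧
      w.count Step.H = d 0 ∧ w.count Step.U = d 1} : ℚ)

/-- Decomposition `G = U^a G₁ H G₂ D^a` of a strictly alternating bargraph. -/
def SADecomp (t : ℕ × List Step × List Step) (G : List Step) : Prop :=
  1 ≤ t.1 ∧ IsStrictAlt t.2.1 ∧ IsStrictAlt (Step.U :: (t.2.2 ++ [Step.D])) ∧
    G = List.replicate t.1 Step.U ++ t.2.1 ++ [Step.H] ++ t.2.2 ++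
      List.replicate t.1 Step.D


-- aux
instance : Fintype Step := ⟨⟨{.U, .H, .D}, by decide⟩, fun x => by cases x <;> decide⟩

lemma hgt_nil : hgt [] = 0 := rfl
lemma hgt_cons (s : Step) (w : List Step) : hgt (s :: w) = s.val + hgt w := by
  simp [hgt]
lemma hgt_append (a b : List Step) : hgt (a ++ b) = hgt a + hgt b := by
  simp [hgt]

lemma hgt_count (w : List Step) : hgt w = (w.count Step.U : ℤ) - (w.count Step.D : ℤ) := by
  induction w with
  | nil => simp [hgt]
  | cons s r ih =>
    cases s <;> simp [hgt_cons, ih, List.count_cons, Step.val] <;> ring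

lemma length_count (w : List Step) :
    w.length = w.count Step.U + w.count Step.H + w.count Step.D := by
  induction w with
  | nil => simp
  | cons s r ih => cases s <;> simp [List.count_cons, ih] <;> ring

lemma motz_length {w : List Step} (h : IsMotzkin w) :
    w.length = w.count Step.H + 2 * w.count Step.U := by
  have h2 := hgt_count w
  rw [h.2] at h2
  have : w.count Step.D = w.count Step.U := by omega
  rw [length_count, this]; ring

lemma finite_motz (a b : ℕ) :
    {w : List Step | IsMotzkin w ∧ Cornerless w ∧ w.count Step.H = a ∧ w.count Step.U = b}.Finite := by
  apply (List.finite_length_eq Step (a + 2*b)).subset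
  rintro w ⟨hm, _, h1, h2⟩
  simp only [Set.mem_setOf_eq]
  rw [motz_length hm, h1, h2]

lemma prefix_append_cases {α : Type*} {l₁ l₂ l : List α} (h : l₁ <+: l₂ ++ l) :
    l₁ <+: l₂ ∨ ∃ r, r <+: l ∧ l₁ = l₂ ++ r := by
  rcases h with ⟨t, ht⟩
  rcases List.append_eq_append_iff.1 ht with ⟨a, ha1, _⟩ | ⟨c, hc1, hc2⟩
  · exact Or.inl ⟨a, ha1.symm⟩
  · exact Or.inr ⟨c, ⟨t, hc2.symm⟩, hc1⟩

lemma cornerless_infix {u w : List Step} (h : Cornerless w) (hu : u <:+: w) : Cornerless u :=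
  ⟨fun hc => h.1 (hc.trans hu), fun hc => h.2 (hc.trans hu)⟩

def Rcl (a b : Step) : Prop := ¬(a = .U ∧ b = .D) ∧ ¬(a = .D ∧ b = .U)

lemma cornerless_iff_chain (w : List Step) : Cornerless w ↔ List.IsChain Rcl w := by
  induction w with
  | nil => simp [Cornerless]
  | cons a r ih =>
    cases r with
    | nil =>
      simp only [List.isChain_singleton, iff_true]
      constructor <;> rintro ⟨s, t, h⟩ <;>
        · have := congrArg List.length h; simp at this; omega
    | cons b l =>
      rw [List.isChain_cons_cons]
      constructor
      · intro hc
        refine ⟨⟨?_, ?_⟩, (ih.1 (cornerless_infix hc ⟨[a], [], by simp⟩))⟩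
        · rintro ⟨rfl, rfl⟩; exact hc.1 ⟨[], l, rfl⟩
        · rintro ⟨rfl, rfl⟩; exact hc.2 ⟨[], l, rfl⟩
      · rintro ⟨hr, hc⟩
        have hbl := ih.2 hc
        constructor <;> rintro ⟨s, t, h⟩
        · cases s with
          | nil => simp at h; obtain ⟨rfl, rfl, rfl⟩ := h; exact hr.1 ⟨rfl, rfl⟩
          | cons x s' => simp at h; exact hbl.1 ⟨s', t, by simpa using h.2⟩
        · cases s with
          | nil => simp at h; obtain ⟨rfl, rfl, rfl⟩ := h; exact hr.2 ⟨rfl, rfl⟩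
          | cons x s' => simp at h; exact hbl.2 ⟨s', t, by simpa using h.2⟩

lemma motz_head_ne_D {u : List Step} (h : IsMotzkinPrefix u) :
    ∀ x ∈ u.head?, x ≠ Step.D := by
  intro x hx hD
  cases u with
  | nil => simp at hx
  | cons a r =>
    simp at hx; subst hx; subst hD
    have := h [Step.D] ⟨r, rfl⟩
    simp [hgt, Step.val] at this

lemma motz_getLast_ne_U {u : List Step} (h : IsMotzkin u) :
    ∀ x ∈ u.getLast?, x ≠ Step.U := by
  intro x hx hU
  have hdec := List.dropLast_append_getLast? _ hx
  have h1 : hgt u = hgt u.dropLast + x.val := by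
    conv_lhs => rw [← hdec]
    rw [hgt_append, hgt_cons, hgt_nil]; ring
  have h2 : 0 ≤ hgt u.dropLast := h.1 _ ⟨[x], hdec⟩
  rw [h.2, hU] at h1
  simp [Step.val] at h1
  omega

lemma enc_ok {u t : List Step}
    (hu : IsMotzkin u) (hu0 : u ≠ []) (hcu : Cornerless u)
    (ht : IsMotzkin t) (hct : Cornerless t) (htU : ∀ v, t ≠ Step.U :: v) :
    IsMotzkin (Step.U :: u ++ Step.D :: t) ∧ Cornerless (Step.U :: u ++ Step.D :: t) := by
  rw [List.cons_append]
  refine ⟨⟨?_, ?_⟩, ?_⟩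
  · intro p hp
    cases p with
    | nil => simp [hgt]
    | cons a q =>
      rw [List.cons_prefix_cons] at hp
      obtain ⟨rfl, hq⟩ := hp
      rcases prefix_append_cases hq with hq1 | ⟨r, hr, rfl⟩
      · have := hu.1 _ hq1
        rw [hgt_cons]; simp [Step.val]; omega
      · cases r with
        | nil => rw [hgt_cons, List.append_nil, hu.2]; simp [Step.val]
        | cons b r' =>
          rw [List.cons_prefix_cons] at hr
          obtain ⟨rfl, hr'⟩ := hr
          have := ht.1 _ hr'
          rw [hgt_cons, hgt_append, hu.2, hgt_cons]
          simp [Step.val]; omega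
  · rw [hgt_cons, hgt_append, hu.2, hgt_cons, ht.2]; simp [Step.val]
  · rw [cornerless_iff_chain, List.isChain_cons]
    constructor
    · intro y hy
      rw [List.head?_append_of_ne_nil _ hu0] at hy
      have := motz_head_ne_D hu.1 y hy
      exact ⟨fun h => this h.2, fun h => by cases h.1⟩
    · rw [List.isChain_append]
      refine ⟨(cornerless_iff_chain u).1 hcu, ?_, ?_⟩
      · rw [List.isChain_cons]
        refine ⟨?_, (cornerless_iff_chain t).1 hct⟩
        intro y hy
        constructor
        · rintro ⟨h1, _⟩; cases h1
        · rintro ⟨_, rfl⟩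
          cases t with
          | nil => simp at hy
          | cons a r => simp at hy; exact htU r (by rw [hy])
      · intro x hx y hy
        simp at hy; subst hy
        have := motz_getLast_ne_U hu x hx
        exact ⟨fun h => this h.1, fun h => (by cases h.2)⟩

lemma first_return {rest : List Step}
    (hw : IsMotzkin (Step.U :: rest)) (hc : Cornerless (Step.U :: rest)) :
    ∃ u t, rest = u ++ Step.D :: t ∧ IsMotzkin u ∧ u ≠ [] ∧ Cornerless u ∧
      IsMotzkin t ∧ Cornerless t ∧ (∀ v, t ≠ Step.U :: v) := by
  have hrest : hgt rest = -1 := by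
    have := hw.2; rw [hgt_cons] at this; simp [Step.val] at this; omega
  have hP : ∃ n, hgt (rest.take n) < 0 := ⟨rest.length, by simp [hrest]⟩
  classical
  let n := Nat.find hP
  have hn : hgt (rest.take n) < 0 := Nat.find_spec hP
  have hmin : ∀ k < n, 0 ≤ hgt (rest.take k) := fun k hk => by
    have := Nat.find_min hP hk; omega
  have hn0 : n ≠ 0 := by
    intro h; rw [show n = 0 from h] at hn; simp [hgt] at hn
  have hnle : n ≤ rest.length := Nat.find_min' hP (by simp [hrest])
  obtain ⟨m, hm⟩ : ∃ m, n = m + 1 := ⟨n - 1, by omega⟩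
  have hmlt : m < rest.length := by omega
  set s := rest.get ⟨m, hmlt⟩ with hs
  have htake : rest.take n = rest.take m ++ [s] := by
    rw [hm, List.take_succ]
    simp [hs, List.getElem?_eq_getElem hmlt]
  have hum : 0 ≤ hgt (rest.take m) := hmin m (by omega)
  have hsplit : hgt (rest.take n) = hgt (rest.take m) + s.val := by
    rw [htake, hgt_append, hgt_cons, hgt_nil]; ring
  have hsD : s = Step.D := by
    cases hD : s <;> rw [hD] at hsplit <;> simp [Step.val] at hsplit <;> omega
  have hu0 : hgt (rest.take m) = 0 := by
    rw [hsD] at hsplit; simp [Step.val] at hsplit; omega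
  set u := rest.take m with hudef
  set t := rest.drop n with htdef
  have hdecomp : rest = u ++ Step.D :: t := by
    conv_lhs => rw [← List.take_append_drop n rest]
    rw [htake, hsD, htdef]; simp
  have humotz : IsMotzkin u := by
    refine ⟨?_, hu0⟩
    intro p hp
    have hple : p.length ≤ m := by
      have := hp.length_le; simpa [hudef, hmlt.le] using this
    have : p = rest.take (min p.length m) := by
      rw [← List.take_take]
      exact List.prefix_iff_eq_take.1 hp
    rw [this]
    exact hmin _ (by omega)
  have hune : u ≠ [] := by
    intro h
    rw [h, List.nil_append] at hdecomp
    exact hc.1 ⟨[], t, by rw [hdecomp]; rfl⟩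
  have htmotz : IsMotzkin t := by
    constructor
    · intro q hq
      have hpre : Step.U :: (u ++ Step.D :: q) <+: Step.U :: rest := by
        rw [hdecomp]
        apply (List.prefix_cons_inj _).2
        obtain ⟨r, hr⟩ := hq
        exact ⟨r, by rw [← hr]; simp⟩
      have := hw.1 _ hpre
      rw [hgt_cons, hgt_append, hu0, hgt_cons] at this
      simp [Step.val] at this; omega
    · have : hgt rest = hgt u + (-1) + hgt t := by
        rw [hdecomp, hgt_append, hgt_cons]; simp [Step.val]; ring
      rw [hrest, hu0] at this; omega
  have hwin : Step.U :: rest = [Step.U] ++ u ++ (Step.D :: t) := by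
    rw [hdecomp]; simp
  refine ⟨u, t, hdecomp, humotz, hune, cornerless_infix hc ⟨[Step.U], Step.D :: t, hwin.symm⟩,
    htmotz, cornerless_infix hc ⟨Step.U :: u ++ [Step.D], [], by rw [hwin]; simp⟩, ?_⟩
  intro v hv
  refine hc.2 ⟨Step.U :: u, v, ?_⟩
  rw [hwin, hv]; simp

lemma enc_inj {u u' t t' : List Step} (hu : IsMotzkin u) (hu' : IsMotzkin u')
    (h : Step.U :: u ++ Step.D :: t = Step.U :: u' ++ Step.D :: t') : u = u' ∧ t = t' := by
  rw [List.cons_append, List.cons_append, List.cons.injEq] at h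
  have h2 := h.2
  rcases List.append_eq_append_iff.1 h2 with ⟨a, ha1, ha2⟩ | ⟨c, hc1, hc2⟩
  · cases a with
    | nil => simp at ha1 ha2; exact ⟨ha1.symm, ha2⟩
    | cons x a' =>
      rw [List.cons_append, List.cons.injEq] at ha2
      obtain ⟨rfl, rfl⟩ := ha2
      exfalso
      have hpre : u ++ [Step.D] <+: u' := ⟨a', by rw [ha1]; simp⟩
      have := hu'.1 _ hpre
      rw [hgt_append, hu.2, hgt_cons, hgt_nil] at this
      simp [Step.val] at this
  · cases c with
    | nil => simp at hc1 hc2; exact ⟨hc1, hc2.symm⟩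
    | cons x c' =>
      rw [List.cons_append, List.cons.injEq] at hc2
      obtain ⟨rfl, rfl⟩ := hc2
      exfalso
      have hpre : u' ++ [Step.D] <+: u := ⟨c', by rw [hc1]; simp⟩
      have := hu.1 _ hpre
      rw [hgt_append, hu'.2, hgt_cons, hgt_nil] at this
      simp [Step.val] at this

open Finsupp in
lemma fin2_ext {d e : Fin 2 →₀ ℕ} (h0 : d 0 = e 0) (h1 : d 1 = e 1) : d = e := by
  ext i
  match i with
  | 0 => exact h0
  | 1 => exact h1

abbrev motzP (w : List Step) : Prop := IsMotzkin w ∧ Cornerless w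

def MProp (d : Fin 2 →₀ ℕ) (w : List Step) : Prop :=
  motzP w ∧ w.count Step.H = d 0 ∧ w.count Step.U = d 1

def NProp (d : Fin 2 →₀ ℕ) (w : List Step) : Prop := MProp d w ∧ w ≠ []

def WProp (d : Fin 2 →₀ ℕ) (w : List Step) : Prop := MProp d w ∧ ∀ v, w ≠ Step.U :: v

def PProp (d : Fin 2 →₀ ℕ) (p : List Step × List Step) : Prop :=
  (motzP p.1 ∧ p.1 ≠ []) ∧ (motzP p.2 ∧ ∀ v, p.2 ≠ Step.U :: v) ∧
    p.1.count Step.H + p.2.count Step.H = d 0 ∧ p.1.count Step.U + p.2.count Step.U = d 1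

lemma finite_sub {a b : ℕ} {P : List Step → Prop}
    (h : ∀ w, P w → MProp (Finsupp.single 0 a + Finsupp.single 1 b) w) :
    Finite {w : List Step // P w} := by
  have hf := finite_motz a b
  haveI := hf.to_subtype
  apply Finite.of_injective
    (fun x => (⟨x.1, by
      obtain ⟨h1, h2, h3⟩ := h x.1 x.2
      refine ⟨h1.1, h1.2, ?_, ?_⟩ <;> simp_all [Finsupp.single_apply]⟩ :
      {w : List Step // w ∈ {w : List Step | IsMotzkin w ∧ Cornerless w ∧
        w.count Step.H = a ∧ w.count Step.U = b}}))
  intro x y hxy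
  rw [Subtype.mk.injEq] at hxy
  exact Subtype.ext hxy

lemma MProp_finite (d : Fin 2 →₀ ℕ) : Finite {w : List Step // MProp d w} := by
  apply finite_sub (a := d 0) (b := d 1)
  intro w hw
  refine ⟨hw.1, ?_, ?_⟩ <;> simp [Finsupp.single_apply, hw.2.1, hw.2.2]

lemma NProp_finite (d : Fin 2 →₀ ℕ) : Finite {w : List Step // NProp d w} := by
  apply finite_sub (a := d 0) (b := d 1)
  intro w hw
  refine ⟨hw.1.1, ?_, ?_⟩ <;> simp [Finsupp.single_apply, hw.1.2.1, hw.1.2.2]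

lemma WProp_finite (d : Fin 2 →₀ ℕ) : Finite {w : List Step // WProp d w} := by
  apply finite_sub (a := d 0) (b := d 1)
  intro w hw
  refine ⟨hw.1.1, ?_, ?_⟩ <;> simp [Finsupp.single_apply, hw.1.2.1, hw.1.2.2]

lemma PProp_finite (d : Fin 2 →₀ ℕ) : Finite {p : List Step × List Step // PProp d p} := by
  have hf : {l : List Step | l.length ≤ d 0 + 2 * d 1}.Finite := List.finite_length_le _ _
  haveI := (hf.prod hf).to_subtype
  apply Finite.of_injective (fun x =>
    (⟨x.1, by
      obtain ⟨⟨h1, _⟩, ⟨h2, _⟩, h3, h4⟩ := x.2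
      refine ⟨?_, ?_⟩ <;> simp only [Set.mem_setOf_eq]
      · rw [motz_length h1.1]; omega
      · rw [motz_length h2.1]; omega⟩ :
      ({l : List Step | l.length ≤ d 0 + 2 * d 1} ×ˢ {l : List Step | l.length ≤ d 0 + 2 * d 1} : Set _)))
  intro x y hxy
  rw [Subtype.mk.injEq] at hxy
  exact Subtype.ext hxy

noncomputable def MGc (d : Fin 2 →₀ ℕ) : ℕ := Nat.card {w : List Step // MProp d w}
noncomputable def Ncnt (d : Fin 2 →₀ ℕ) : ℕ := Nat.card {w : List Step // NProp d w}
noncomputable def Wcnt (d : Fin 2 →₀ ℕ) : ℕ := Nat.card {w : List Step // WProp d w}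
noncomputable def Pcnt (d : Fin 2 →₀ ℕ) : ℕ := Nat.card {p : List Step × List Step // PProp d p}

lemma MProp_nil (d : Fin 2 →₀ ℕ) (w : List Step) (h : MProp d w) (hd : d = 0) : w = [] := by
  subst hd
  obtain ⟨⟨hm, _⟩, h1, h2⟩ := h
  simp only [Finsupp.coe_zero, Pi.zero_apply] at h1 h2
  have := motz_length hm
  rw [h1, h2] at this
  simpa using List.length_eq_zero_iff.mp (by omega)

lemma MProp_nil' (d : Fin 2 →₀ ℕ) (h : MProp d [] ) : d = 0 := by
  obtain ⟨_, h1, h2⟩ := h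
  simp at h1 h2
  exact (fin2_ext (by simp [← h1]) (by simp [← h2])).symm

lemma motz_nil : MProp 0 [] := by
  refine ⟨⟨⟨fun p hp => ?_, rfl⟩, ?_, ?_⟩, by simp, by simp⟩
  · simp [List.prefix_nil.1 hp, hgt]
  · rintro ⟨s, t, h⟩; simp at h
  · rintro ⟨s, t, h⟩; simp at h

lemma head_of_WProp {d : Fin 2 →₀ ℕ} {w : List Step} (h : WProp d w) (hw : w ≠ []) :
    ∃ v, w = Step.H :: v := by
  cases w with
  | nil => exact absurd rfl hw
  | cons a r =>
    cases a with
    | U => exact absurd rfl (h.2 r)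
    | H => exact ⟨r, rfl⟩
    | D =>
      exact absurd rfl (motz_head_ne_D h.1.1.1.1 Step.D (by simp) : Step.D ≠ Step.D)

lemma motz_consH {v : List Step} (h : motzP v) : motzP (Step.H :: v) := by
  refine ⟨⟨?_, ?_⟩, ?_⟩
  · intro p hp
    cases p with
    | nil => simp [hgt]
    | cons a q =>
      rw [List.cons_prefix_cons] at hp
      obtain ⟨rfl, hq⟩ := hp
      rw [hgt_cons]
      have := h.1.1 _ hq
      simp [Step.val]; omega
  · rw [hgt_cons, h.1.2]; simp [Step.val]
  · rw [cornerless_iff_chain, List.isChain_cons]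
    refine ⟨fun y _ => ⟨?_, ?_⟩, (cornerless_iff_chain v).1 h.2⟩ <;>
      · rintro ⟨h1, h2⟩; cases h1

lemma motz_tailH {v : List Step} (h : motzP (Step.H :: v)) : motzP v := by
  refine ⟨⟨?_, ?_⟩, cornerless_infix h.2 ⟨[Step.H], [], by simp⟩⟩
  · intro p hp
    have := h.1.1 (Step.H :: p) (List.cons_prefix_cons.2 ⟨rfl, hp⟩)
    rwa [hgt_cons, show Step.H.val = 0 from rfl, zero_add] at this
  · have := h.1.2
    rwa [hgt_cons, show Step.H.val = 0 from rfl, zero_add] at this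

lemma card_consH (d : Fin 2 →₀ ℕ) :
    Nat.card {w : List Step // MProp d w ∧ ∃ v, w = Step.H :: v} =
      if 1 ≤ d 0 then MGc (d - Finsupp.single 0 1) else 0 := by
  by_cases hd : 1 ≤ d 0
  · rw [if_pos hd]
    have he0 : (d - Finsupp.single 0 1 : Fin 2 →₀ ℕ) 0 = d 0 - 1 := by
      rw [Finsupp.tsub_apply]; simp
    have he1 : (d - Finsupp.single 0 1 : Fin 2 →₀ ℕ) 1 = d 1 := by
      rw [Finsupp.tsub_apply]; simp [Finsupp.single_apply]
    haveI := MProp_finite (d - Finsupp.single 0 1)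
    refine (Nat.card_congr (Equiv.ofBijective (f := fun x =>
      (⟨Step.H :: x.1, ⟨motz_consH x.2.1, ?_, ?_⟩, x.1, rfl⟩ :
        {w : List Step // MProp d w ∧ ∃ v, w = Step.H :: v})) ⟨?_, ?_⟩)).symm
    · have := x.2.2.1; rw [he0] at this; simp [List.count_cons]; omega
    · have := x.2.2.2; rw [he1] at this; simp [List.count_cons, this]
    · rintro ⟨v, hv⟩ ⟨v', hv'⟩ hh
      simp only [Subtype.mk.injEq, List.cons.injEq, true_and] at hh
      exact Subtype.ext hh
    · rintro ⟨w, hm, v, rfl⟩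
      have h1 := hm.2.1
      have h2 := hm.2.2
      simp [List.count_cons] at h1 h2
      refine ⟨⟨v, motz_tailH hm.1, by rw [he0]; omega, by rw [he1]; omega⟩, rfl⟩
  · rw [if_neg hd]
    have : IsEmpty {w : List Step // MProp d w ∧ ∃ v, w = Step.H :: v} := by
      constructor
      rintro ⟨w, hm, v, rfl⟩
      have := hm.2.1
      simp [List.count_cons] at this
      omega
    simp [Nat.card_of_isEmpty]

lemma card_consU (d : Fin 2 →₀ ℕ) :
    Nat.card {w : List Step // MProp d w ∧ ∃ v, w = Step.U :: v} =
      if 1 ≤ d 1 then Pcnt (d - Finsupp.single 1 1) else 0 := by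
  by_cases hd : 1 ≤ d 1
  · rw [if_pos hd]
    set e := d - Finsupp.single 1 1 with he
    have he0 : (e : Fin 2 →₀ ℕ) 0 = d 0 := by
      rw [he, Finsupp.tsub_apply]; simp [Finsupp.single_apply]
    have he1 : (e : Fin 2 →₀ ℕ) 1 = d 1 - 1 := by
      rw [he, Finsupp.tsub_apply]; simp
    haveI := PProp_finite e
    refine (Nat.card_congr (Equiv.ofBijective (f := fun x =>
      (⟨Step.U :: x.1.1 ++ Step.D :: x.1.2, ⟨?_, ?_, ?_⟩, x.1.1 ++ Step.D :: x.1.2, by simp⟩ :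
        {w : List Step // MProp d w ∧ ∃ v, w = Step.U :: v})) ⟨?_, ?_⟩)).symm
  --  motzP
    · obtain ⟨⟨h1, h1n⟩, ⟨h2, h2U⟩, _, _⟩ := x.2
      exact ⟨(enc_ok h1.1 h1n h1.2 h2.1 h2.2 h2U).1, (enc_ok h1.1 h1n h1.2 h2.1 h2.2 h2U).2⟩
    · obtain ⟨_, _, h3, _⟩ := x.2
      rw [he0] at h3
      simp [List.count_cons, List.count_append]
      omega
    · obtain ⟨_, _, _, h4⟩ := x.2
      rw [he1] at h4
      simp [List.count_cons, List.count_append]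
      omega
    · rintro ⟨⟨u, t⟩, hp⟩ ⟨⟨u', t'⟩, hp'⟩ hh
      simp only [Subtype.mk.injEq] at hh
      obtain ⟨h1, h2⟩ := enc_inj hp.1.1.1 hp'.1.1.1 hh
      simp only [Subtype.mk.injEq, Prod.mk.injEq]
      exact ⟨h1, h2⟩
    · rintro ⟨w, hm, v, rfl⟩
      obtain ⟨u, t, rfl, humotz, hune, hucl, htmotz, htcl, htU⟩ := first_return hm.1.1 hm.1.2
      have hc1 := hm.2.1
      have hc2 := hm.2.2
      simp [List.count_cons, List.count_append] at hc1 hc2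
      exact ⟨⟨(u, t), ⟨⟨humotz, hucl⟩, hune⟩, ⟨⟨htmotz, htcl⟩, htU⟩,
        by show u.count Step.H + t.count Step.H = e 0; rw [he0]; omega,
        by show u.count Step.U + t.count Step.U = e 1; rw [he1]; omega⟩, rfl⟩
  · rw [if_neg hd]
    have : IsEmpty {w : List Step // MProp d w ∧ ∃ v, w = Step.U :: v} := by
      constructor
      rintro ⟨w, hm, v, rfl⟩
      have := hm.2.2
      simp [List.count_cons] at this
      omega
    simp [Nat.card_of_isEmpty]

lemma finite_and {P Q : List Step → Prop} (h : Finite {w : List Step // P w}) :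
    Finite {w : List Step // P w ∧ Q w} := by
  apply Finite.of_injective (fun x => (⟨x.1, x.2.1⟩ : {w : List Step // P w}))
  rintro ⟨a, _⟩ ⟨b, _⟩ hab
  rw [Subtype.mk.injEq] at hab
  exact Subtype.ext hab

lemma MGc_partition (d : Fin 2 →₀ ℕ) :
    MGc d = (if d = 0 then 1 else 0)
      + Nat.card {w : List Step // MProp d w ∧ ∃ v, w = Step.H :: v}
      + Nat.card {w : List Step // MProp d w ∧ ∃ v, w = Step.U :: v} := by
  haveI hM := MProp_finite d
  haveI := finite_and (Q := fun w => ∃ v, w = Step.H :: v) hM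
  haveI := finite_and (Q := fun w => ∃ v, w = Step.U :: v) hM
  by_cases hd : d = 0
  · subst hd
    rw [if_pos rfl]
    have h1 : MGc 0 = 1 := by
      rw [MGc, Nat.card_eq_one_iff_unique]
      constructor
      · constructor
        rintro ⟨a, ha⟩ ⟨b, hb⟩
        rw [Subtype.mk.injEq, MProp_nil _ _ ha rfl, MProp_nil _ _ hb rfl]
      · exact ⟨⟨[], motz_nil⟩⟩
    have h2 : IsEmpty {w : List Step // MProp 0 w ∧ ∃ v, w = Step.H :: v} := by
      constructor; rintro ⟨w, hm, v, rfl⟩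
      exact absurd (MProp_nil _ _ hm rfl) (by simp)
    have h3 : IsEmpty {w : List Step // MProp 0 w ∧ ∃ v, w = Step.U :: v} := by
      constructor; rintro ⟨w, hm, v, rfl⟩
      exact absurd (MProp_nil _ _ hm rfl) (by simp)
    rw [h1, Nat.card_of_isEmpty, Nat.card_of_isEmpty]
  · rw [if_neg hd]
    rw [MGc, Nat.zero_add, ← Nat.card_sum]
    apply Nat.card_congr
    refine (Equiv.ofBijective (Sum.elim (fun x => ⟨x.1, x.2.1⟩) (fun x => ⟨x.1, x.2.1⟩)) ⟨?_, ?_⟩).symm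
    · rintro (⟨a, ha, v, rfl⟩ | ⟨a, ha, v, rfl⟩) (⟨b, hb, v', rfl⟩ | ⟨b, hb, v', rfl⟩) hab <;>
        simp only [Sum.elim_inl, Sum.elim_inr, Subtype.mk.injEq] at hab <;>
        first
        | (simp only [Sum.inl.injEq, Sum.inr.injEq, Subtype.mk.injEq]; exact hab)
        | (exfalso; rw [List.cons.injEq] at hab; exact Step.noConfusion hab.1)
    · rintro ⟨w, hw⟩
      cases w with
      | nil => exact absurd (MProp_nil' _ hw) hd
      | cons a r =>
        cases a with
        | H => exact ⟨Sum.inl ⟨Step.H :: r, hw, r, rfl⟩, rfl⟩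
        | U => exact ⟨Sum.inr ⟨Step.U :: r, hw, r, rfl⟩, rfl⟩
        | D => exact absurd rfl (motz_head_ne_D hw.1.1.1 Step.D (by simp) : Step.D ≠ Step.D)

noncomputable def cnt (w : List Step) : Fin 2 →₀ ℕ :=
  Finsupp.single 0 (w.count Step.H) + Finsupp.single 1 (w.count Step.U)

lemma cnt_0 (w : List Step) : cnt w 0 = w.count Step.H := by
  simp [cnt, Finsupp.single_apply]
lemma cnt_1 (w : List Step) : cnt w 1 = w.count Step.U := by
  simp [cnt, Finsupp.single_apply]

lemma nat_card_sigma {ι : Type*} [Fintype ι] (β : ι → Type*) [∀ i, Finite (β i)] :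
    Nat.card (Σ i, β i) = ∑ i, Nat.card (β i) := by
  classical
  haveI := fun i => Fintype.ofFinite (β i)
  simp [Nat.card_eq_fintype_card]

lemma Pcnt_eq (d : Fin 2 →₀ ℕ) :
    Pcnt d = ∑ p ∈ Finset.HasAntidiagonal.antidiagonal d, Ncnt p.1 * Wcnt p.2 := by
  classical
  haveI : ∀ p : (Finset.HasAntidiagonal.antidiagonal d : Finset _),
      Finite ({u : List Step // NProp p.1.1 u} × {t : List Step // WProp p.1.2 t}) := by
    intro p
    haveI := NProp_finite p.1.1
    haveI := WProp_finite p.1.2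
    infer_instance
  have hcard : Pcnt d = Nat.card (Σ p : (Finset.HasAntidiagonal.antidiagonal d : Finset _),
      ({u : List Step // NProp p.1.1 u} × {t : List Step // WProp p.1.2 t})) := by
    apply (Nat.card_congr (Equiv.ofBijective (f := fun x =>
      (⟨(x.2.1.1, x.2.2.1), ⟨x.2.1.2.1.1, x.2.1.2.2⟩, ⟨x.2.2.2.1.1, x.2.2.2.2⟩, ?_, ?_⟩ :
        {p : List Step × List Step // PProp d p})) ⟨?_, ?_⟩)).symm
    · rintro ⟨⟨p, hp⟩, ⟨u, hu⟩, ⟨t, ht⟩⟩ ⟨⟨p', hp'⟩, ⟨u', hu'⟩, ⟨t', ht'⟩⟩ hh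
      simp only [Subtype.mk.injEq, Prod.mk.injEq] at hh
      obtain ⟨rfl, rfl⟩ := hh
      obtain rfl : p = p' := by
        apply Prod.ext
        · exact fin2_ext (by rw [← hu.1.2.1, ← hu'.1.2.1]) (by rw [← hu.1.2.2, ← hu'.1.2.2])
        · exact fin2_ext (by rw [← ht.1.2.1, ← ht'.1.2.1]) (by rw [← ht.1.2.2, ← ht'.1.2.2])
      rfl
    · rintro ⟨⟨u, t⟩, ⟨hu1, hu2⟩, ⟨ht1, ht2⟩, hc1, hc2⟩
      refine ⟨⟨⟨(cnt u, cnt t), ?_⟩,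
        ⟨u, ⟨hu1, (cnt_0 u).symm, (cnt_1 u).symm⟩, hu2⟩,
        ⟨t, ⟨ht1, (cnt_0 t).symm, (cnt_1 t).symm⟩, ht2⟩⟩, rfl⟩
      rw [Finset.HasAntidiagonal.mem_antidiagonal]
      exact fin2_ext (by rw [Finsupp.add_apply, cnt_0, cnt_0]; exact hc1)
        (by rw [Finsupp.add_apply, cnt_1, cnt_1]; exact hc2)
    · have hm := Finset.HasAntidiagonal.mem_antidiagonal.1 x.1.2
      have := congrArg (fun f => f 0) hm
      simp only [Finsupp.add_apply] at this
      rw [show x.2.1.1.count Step.H = x.1.1.1 0 from x.2.1.2.1.2.1,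
        show x.2.2.1.count Step.H = x.1.1.2 0 from x.2.2.2.1.2.1]
      exact this
    · have hm := Finset.HasAntidiagonal.mem_antidiagonal.1 x.1.2
      have := congrArg (fun f => f 1) hm
      simp only [Finsupp.add_apply] at this
      rw [show x.2.1.1.count Step.U = x.1.1.1 1 from x.2.1.2.1.2.2,
        show x.2.2.1.count Step.U = x.1.1.2 1 from x.2.2.2.1.2.2]
      exact this
  rw [hcard, nat_card_sigma]
  rw [← Finset.sum_coe_sort (Finset.HasAntidiagonal.antidiagonal d) (fun p => Ncnt p.1 * Wcnt p.2)]
  congr 1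
  funext p
  haveI := NProp_finite p.1.1
  haveI := WProp_finite p.1.2
  rw [Nat.card_prod]
  rfl

noncomputable def MG' : MvPowerSeries (Fin 2) ℚ :=
  fun d => (Nat.card {w : List Step //
    IsMotzkin w ∧ Cornerless w ∧ w.count Step.H = d 0 ∧ w.count Step.U = d 1} : ℚ)

lemma MG'_coeff (d : Fin 2 →₀ ℕ) : MvPowerSeries.coeff d MG' = (MGc d : ℚ) := by
  rw [MvPowerSeries.coeff_apply, MG', MGc]
  congr 1
  exact Nat.card_congr (Equiv.subtypeEquivRight fun w => by unfold MProp motzP; tauto)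

noncomputable def NpsQ : MvPowerSeries (Fin 2) ℚ := fun d => (Ncnt d : ℚ)
noncomputable def WpsQ : MvPowerSeries (Fin 2) ℚ := fun d => (Wcnt d : ℚ)
noncomputable def PpsQ : MvPowerSeries (Fin 2) ℚ := fun d => (Pcnt d : ℚ)

lemma MGc_zero : MGc 0 = 1 := by
  rw [MGc, Nat.card_eq_one_iff_unique]
  refine ⟨⟨?_⟩, ⟨⟨[], motz_nil⟩⟩⟩
  rintro ⟨a, ha⟩ ⟨b, hb⟩
  rw [Subtype.mk.injEq, MProp_nil _ _ ha rfl, MProp_nil _ _ hb rfl]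

lemma coeff_X_mul' (i : Fin 2) (F : MvPowerSeries (Fin 2) ℚ) (d : Fin 2 →₀ ℕ) :
    MvPowerSeries.coeff d (MvPowerSeries.X i * F) =
      if Finsupp.single i 1 ≤ d then MvPowerSeries.coeff (d - Finsupp.single i 1) F else 0 := by
  rw [MvPowerSeries.X_def, MvPowerSeries.coeff_monomial_mul]
  simp

lemma NQ : NpsQ = MG' - 1 := by
  apply MvPowerSeries.ext
  intro d
  rw [map_sub, MG'_coeff, MvPowerSeries.coeff_one, MvPowerSeries.coeff_apply, NpsQ]
  by_cases hd : d = 0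
  · subst hd
    rw [if_pos rfl, MGc_zero]
    have : IsEmpty {w : List Step // NProp 0 w} :=
      ⟨fun x => x.2.2 (MProp_nil _ _ x.2.1 rfl)⟩
    rw [Ncnt, Nat.card_of_isEmpty]
    norm_num
  · rw [if_neg hd, Ncnt, MGc]
    rw [sub_zero]
    norm_cast
    apply Nat.card_congr (Equiv.subtypeEquivRight _)
    intro w
    unfold NProp
    refine ⟨fun h => h.1, fun h => ⟨h, fun hw => hd ?_⟩⟩
    subst hw
    exact MProp_nil' _ h

lemma WQ : WpsQ = 1 + MvPowerSeries.X (0 : Fin 2) * MG' := by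
  apply MvPowerSeries.ext
  intro d
  rw [map_add, MvPowerSeries.coeff_one, coeff_X_mul', MvPowerSeries.coeff_apply, WpsQ]
  by_cases hd : d = 0
  · subst hd
    rw [if_pos rfl, if_neg (by rw [Finsupp.single_le_iff]; simp)]
    have : Wcnt 0 = 1 := by
      rw [Wcnt, Nat.card_eq_one_iff_unique]
      refine ⟨⟨?_⟩, ⟨⟨[], motz_nil, by simp⟩⟩⟩
      rintro ⟨a, ha⟩ ⟨b, hb⟩
      rw [Subtype.mk.injEq, MProp_nil _ _ ha.1 rfl, MProp_nil _ _ hb.1 rfl]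
    rw [this]; norm_num
  · rw [if_neg hd]
    have hW : Wcnt d = Nat.card {w : List Step // MProp d w ∧ ∃ v, w = Step.H :: v} := by
      apply Nat.card_congr (Equiv.subtypeEquivRight _)
      intro w
      constructor
      · intro h
        refine ⟨h.1, head_of_WProp h fun hw => hd ?_⟩
        subst hw; exact MProp_nil' _ h.1
      · rintro ⟨hm, v, rfl⟩
        exact ⟨hm, fun v' h => by cases h⟩
    rw [hW, card_consH d]
    simp only [Finsupp.single_le_iff]
    by_cases h0 : 1 ≤ d 0
    · rw [if_pos h0, if_pos h0, MG'_coeff]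
      norm_num
    · rw [if_neg h0, if_neg h0]
      norm_num

lemma PQ : PpsQ = NpsQ * WpsQ := by
  apply MvPowerSeries.ext
  intro d
  classical
  rw [MvPowerSeries.coeff_mul, MvPowerSeries.coeff_apply, PpsQ, Pcnt_eq]
  push_cast
  apply Finset.sum_congr rfl
  intro p _
  rfl

lemma DQ : MG' = 1 + MvPowerSeries.X (0 : Fin 2) * MG' + MvPowerSeries.X (1 : Fin 2) * PpsQ := by
  apply MvPowerSeries.ext
  intro d
  rw [map_add, map_add, MvPowerSeries.coeff_one, coeff_X_mul', coeff_X_mul', MG'_coeff,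
    MGc_partition d, MG'_coeff]
  rw [card_consH d, card_consU d]
  simp only [Finsupp.single_le_iff]
  rw [show MvPowerSeries.coeff (d - Finsupp.single 1 1) PpsQ
      = (Pcnt (d - Finsupp.single 1 1) : ℚ) from rfl]
  push_cast
  by_cases h0 : 1 ≤ d 0 <;> by_cases h1 : 1 ≤ d 1 <;>
    simp [h0, h1] <;> push_cast <;> ring

theorem MG_equation' :
    MG' = (1 + MvPowerSeries.X (1 : Fin 2) * (MG' - 1))
          * (1 + MvPowerSeries.X (0 : Fin 2) * MG') := by
  conv_rhs => rw [← NQ, ← WQ]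
  rw [show (1 + MvPowerSeries.X (1 : Fin 2) * NpsQ) * WpsQ
      = WpsQ + MvPowerSeries.X (1 : Fin 2) * (NpsQ * WpsQ) from by ring, ← PQ, WQ]
  exact DQ


/-- the generating function `M(x,y)` of cornerless Motzkin paths
satisfies `M = (1 + y(M − 1))(1 + xM)`. -/
theorem MG_equation :
    MG = (1 + MvPowerSeries.X (1 : Fin 2) * (MG - 1))
          * (1 + MvPowerSeries.X (0 : Fin 2) * MG) := by
  have h : MG = MG' := rfl
  rw [h]
  exact MG_equation'
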